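/- There exists an α > 0 and an n₀ ∈ ℕ such that for every even n ≥ n₀ there exists a 3-regular simple graph on n vertices on which αn cops do not suffice to catch the robber in the entanglement game (the robber has a winning strategy against ⌊αn⌋ cops). -/

import Mathlib

/-- One legal move of the cops when the robber stands on `r`: either all cops stay put,
or one cop (possibly coming from off the graph, i.e. from `none`) flies to `r`. -/
def CopMove {V : Type*} {k : ℕ} (r : V) (f f' : Fin k → Option V) : Prop :=
  f' = f ∨ ∃ i : Fin k, f' = Function.update f i (some r)

/-- The cops can force a catch from the position where the cops are placed according to
`f` (a cop with value `none` is off the graph) and the robber stands on `r`.  After the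
cop move `f'`, the robber must move to an unoccupied neighbour; if he has no such
neighbour the cops have won (the inner quantification is vacuous). -/
inductive CopsWin {V : Type*} (G : SimpleGraph V) (k : ℕ) :
    (Fin k → Option V) → V → Prop where
  | step : ∀ (f : Fin k → Option V) (r : V) (f' : Fin k → Option V),
      CopMove r f f' →
      (∀ u : V, G.Adj r u → (∀ i, f' i ≠ some u) → CopsWin G k f' u) →
      CopsWin G k f r

/-- `k` cops suffice to catch the robber on `G`: wherever the robber chooses to start,
the cops (starting off the graph) can catch him. -/
def CopsCatch {V : Type*} (G : SimpleGraph V) (k : ℕ) : Prop :=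
  ∀ r : V, CopsWin G k (fun _ => none) r

open scoped Classical


set_option linter.unusedSectionVars false

namespace Entangle

open Finset
open scoped Fin.NatCast Fin.CommRing

variable {V : Type*} [Fintype V]

/-- The graph `G` with the vertices of `S` deleted (kept as isolated vertices). -/
def Gdel (G : SimpleGraph V) (S : Finset V) : SimpleGraph V where
  Adj a b := G.Adj a b ∧ a ∉ S ∧ b ∉ S
  symm := ⟨by intro a b h; exact ⟨h.1.symm, h.2.2, h.2.1⟩⟩
  loopless := ⟨by intro a h; exact G.loopless.irrefl a h.1⟩

lemma Gdel_mono (G : SimpleGraph V) {S S' : Finset V} (h : S' ⊆ S) :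
    Gdel G S ≤ Gdel G S' := by
  intro a b hab
  exact ⟨hab.1, fun ha => hab.2.1 (h ha), fun hb => hab.2.2 (h hb)⟩

/-- vertices occupied by cops -/
noncomputable def occ {k : ℕ} (f : Fin k → Option V) : Finset V :=
  univ.filter (fun v => ∃ i, f i = some v)

lemma mem_occ {k : ℕ} (f : Fin k → Option V) (v : V) :
    v ∈ occ f ↔ ∃ i, f i = some v := by simp [occ]

lemma card_occ_le {k : ℕ} (f : Fin k → Option V) : (occ f).card ≤ k := by
  rcases Finset.eq_empty_or_nonempty (occ f) with h | ⟨v0, hv0⟩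
  · simp [h]
  · obtain ⟨-, hex⟩ := Finset.mem_filter.mp hv0
    haveI : Nonempty (Fin k) := ⟨hex.choose⟩
    have : (occ f).card ≤ (univ : Finset (Fin k)).card := by
      apply Finset.card_le_card_of_injOn
        (fun v => if h : ∃ i, f i = some v then h.choose else Classical.arbitrary _)
        (fun v _ => Finset.mem_univ _)
      intro v hv w hw hvw
      have hv : ∃ i, f i = some v := (mem_occ f v).mp (Finset.mem_coe.mp hv)
      have hw : ∃ i, f i = some w := (mem_occ f w).mp (Finset.mem_coe.mp hw)
      simp only [dif_pos hv, dif_pos hw] at hvw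
      have h1 := hv.choose_spec
      have h2 := hw.choose_spec
      rw [hvw, h2] at h1
      exact (Option.some_inj.mp h1).symm
    simpa using this

/-- the component of `v` in `G - S`, as a finset -/
noncomputable def compF (G : SimpleGraph V) (S : Finset V) (v : V) : Finset V :=
  univ.filter (fun u => (Gdel G S).Reachable v u)

lemma mem_compF (G : SimpleGraph V) (S : Finset V) (v u : V) :
    u ∈ compF G S v ↔ (Gdel G S).Reachable v u := by simp [compF]

lemma mem_compF_self (G : SimpleGraph V) (S : Finset V) (v : V) : v ∈ compF G S v :=
  Finset.mem_filter.mpr ⟨Finset.mem_univ _, SimpleGraph.Reachable.refl v⟩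

/-- every vertex reachable in `G - S` from a vertex outside `S` is outside `S`. -/
lemma reach_not_mem (G : SimpleGraph V) (S : Finset V) {a b : V}
    (h : (Gdel G S).Reachable a b) (ha : a ∉ S) : b ∉ S := by
  obtain ⟨w⟩ := h
  induction w with
  | nil => exact ha
  | cons h p ih => exact ih h.2.2

lemma walk_support_not_mem (G : SimpleGraph V) (S : Finset V) {a b : V}
    (w : (Gdel G S).Walk a b) (ha : a ∉ S) : ∀ y ∈ w.support, y ∉ S := by
  induction w with
  | nil => intro y hy; simp only [SimpleGraph.Walk.support_nil, List.mem_singleton] at hy; subst hy; exact ha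
  | cons h p ih =>
    intro y hy
    rw [SimpleGraph.Walk.support_cons] at hy
    rcases List.mem_cons.mp hy with rfl | hy
    · exact ha
    · exact ih h.2.2 y hy

lemma walk_lift (G : SimpleGraph V) (S T : Finset V) {a b : V}
    (w : (Gdel G S).Walk a b) (hT : ∀ y ∈ w.support, y ∉ T) :
    (Gdel G T).Reachable a b := by
  induction w with
  | nil => exact SimpleGraph.Reachable.refl _
  | @cons a c b h p ih =>
    have ha : a ∉ T := hT _ (SimpleGraph.Walk.start_mem_support _)
    have hc : c ∉ T := by
      refine hT _ ?_
      rw [SimpleGraph.Walk.support_cons]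
      exact List.mem_cons_of_mem _ (SimpleGraph.Walk.start_mem_support _)
    have hadj : (Gdel G T).Adj a c := ⟨h.1, ha, hc⟩
    refine hadj.reachable.trans (ih ?_)
    intro y hy
    refine hT y ?_
    rw [SimpleGraph.Walk.support_cons]
    exact List.mem_cons_of_mem _ hy

/-- The key property: every small deletion set leaves a majority component. -/
def BigComp (G : SimpleGraph V) (c : ℕ) : Prop :=
  ∀ S : Finset V, S.card ≤ c → ∃ v, v ∉ S ∧ Fintype.card V < 2 * (compF G S v).card

lemma occ_copmove {k : ℕ} {r : V} {f f' : Fin k → Option V} (h : CopMove r f f') :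
    occ f' ⊆ occ f ∪ {r} := by
  rcases h with rfl | ⟨i, rfl⟩
  · exact Finset.subset_union_left
  · intro v hv
    rw [mem_occ] at hv
    obtain ⟨j, hj⟩ := hv
    by_cases hji : j = i
    · subst hji
      rw [Function.update_self] at hj
      simp [Option.some_inj.mp hj]
    · rw [Function.update_of_ne hji] at hj
      exact Finset.mem_union_left _ ((mem_occ _ _).mpr ⟨j, hj⟩)

theorem robber_wins (G : SimpleGraph V) (k : ℕ)
    (hbig : BigComp G (k+1)) : ¬ CopsCatch G k := by
  intro hcatch
  have main : ∀ (f : Fin k → Option V) (r : V), CopsWin G k f r →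
      Fintype.card V < 2 * (compF G (occ f \ {r}) r).card → False := by
    intro f r hw
    induction hw with
    | step f r f' hmove hall ih =>
      intro hInv
      have hocc' : occ f' ⊆ occ f ∪ {r} := occ_copmove hmove
      set T : Finset V := occ f' ∪ {r} with hT
      have hTsub : T ⊆ occ f ∪ {r} := Finset.union_subset hocc' Finset.subset_union_right
      have hTcard : T.card ≤ k + 1 := by
        calc T.card ≤ (occ f').card + ({r} : Finset V).card := Finset.card_union_le _ _
        _ ≤ k + 1 := by
            have := card_occ_le f'
            simp only [Finset.card_singleton]; omega
      obtain ⟨v, hvT, hvbig⟩ := hbig T hTcard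
      set A : Finset V := compF G T v with hA
      set B : Finset V := compF G (occ f \ {r}) r with hB
      -- A and B intersect
      have hAB : (A ∩ B).Nonempty := by
        rw [← Finset.card_pos]
        have h1 : (A ∪ B).card + (A ∩ B).card = A.card + B.card :=
          Finset.card_union_add_card_inter _ _
        have h2 : (A ∪ B).card ≤ Fintype.card V := by
          simpa using Finset.card_le_card (Finset.subset_univ (A ∪ B))
        omega
      obtain ⟨x, hx⟩ := hAB
      obtain ⟨hxA, hxB⟩ := Finset.mem_inter.mp hx
      have hxA' : (Gdel G T).Reachable v x := (mem_compF _ _ _ _).mp hxA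
      have hxB' : (Gdel G (occ f \ {r})).Reachable r x := (mem_compF _ _ _ _).mp hxB
      -- r ≠ x
      have hrx : r ≠ x := by
        rintro rfl
        have : r ∉ T := reach_not_mem G T hxA' hvT
        exact this (Finset.mem_union_right _ (Finset.mem_singleton_self r))
      -- extract first step of a path from r to x avoiding occ f \ {r}
      obtain ⟨w⟩ := hxB'
      obtain ⟨q, hq⟩ := w.toPath
      cases q with
      | nil => exact absurd rfl hrx
      | @cons _ u _ hadj q' =>
        rw [SimpleGraph.Walk.cons_isPath_iff] at hq
        have hrq : r ∉ q'.support := hq.2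
        have hq'S : ∀ y ∈ q'.support, y ∉ occ f \ {r} :=
          walk_support_not_mem G _ q' hadj.2.2
        have hTnot : ∀ y ∈ q'.support, y ∉ T := by
          intro y hy hyT
          rcases Finset.mem_union.mp (hTsub hyT) with h1 | h1
          · exact hq'S y hy (Finset.mem_sdiff.mpr ⟨h1, by
              simp only [Finset.mem_singleton]
              rintro rfl
              exact hrq hy⟩)
          · rw [Finset.mem_singleton] at h1
            subst h1
            exact hrq hy
        have hreach : (Gdel G T).Reachable u x := walk_lift G _ T q' hTnot
        have hvu : (Gdel G T).Reachable v u := hxA'.trans hreach.symm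
        have huT : u ∉ T := reach_not_mem G T hvu hvT
        have hGadj : G.Adj r u := hadj.1
        have hfree : ∀ i, f' i ≠ some u := by
          intro i hi
          exact huT (Finset.mem_union_left _ ((mem_occ _ _).mpr ⟨i, hi⟩))
        refine ih u hGadj hfree ?_
        have hsub : A ⊆ compF G (occ f' \ {u}) u := by
          intro y hy
          have hvy : (Gdel G T).Reachable v y := (mem_compF _ _ _ _).mp hy
          have huy : (Gdel G T).Reachable u y := hvu.symm.trans hvy
          have hle : Gdel G T ≤ Gdel G (occ f' \ {u}) :=
            Gdel_mono G (Finset.Subset.trans (Finset.sdiff_subset) Finset.subset_union_left)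
          exact (mem_compF _ _ _ _).mpr (huy.mono hle)
        calc Fintype.card V < 2 * A.card := hvbig
        _ ≤ 2 * (compF G (occ f' \ {u}) u).card := by
            have := Finset.card_le_card hsub
            omega
  obtain ⟨v0, hv0, hbig0⟩ := hbig ∅ (by simp)
  have h0 : occ (fun _ : Fin k => none) \ {v0} = (∅ : Finset V) := by
    simp [occ]
  exact main _ v0 (hcatch v0) (by rw [h0]; exact hbig0)




variable {α : Type*} [Fintype α] [DecidableEq α]

/-- permutations fixing `R` pointwise are at most `(card α - |R|)!` many -/
lemma card_perm_fixing (R : Finset α) :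
    (univ.filter fun π : Equiv.Perm α => ∀ y ∈ R, π y = y).card
      ≤ Nat.factorial (Fintype.card α - R.card) := by
  classical
  rw [← Fintype.card_subtype]
  have hmap : ∀ (π : Equiv.Perm α), (∀ y ∈ R, π y = y) → ∀ x : α, x ∉ R ↔ π x ∉ R := by
    intro π hπ x
    constructor
    · intro hx hmem
      have h1 : π (π x) = π x := hπ _ hmem
      have h2 := π.injective h1
      rw [h2] at hmem
      exact hx hmem
    · intro hx hmem
      refine hx ?_
      rw [hπ x hmem]
      exact hmem
  have hinj : Function.Injective
      (fun π : {π : Equiv.Perm α // ∀ y ∈ R, π y = y} =>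
        Equiv.Perm.subtypePerm (p := fun x => x ∉ R) π.1 (fun x => (hmap π.1 π.2 x).symm) ) := by
    rintro ⟨π₁, h₁⟩ ⟨π₂, h₂⟩ h
    simp only [Subtype.mk.injEq]
    ext x
    by_cases hx : x ∈ R
    · rw [h₁ x hx, h₂ x hx]
    · have := congrArg (fun (e : Equiv.Perm {x : α // x ∉ R}) => (e ⟨x, hx⟩ : {x : α // x ∉ R}).1) h
      simpa [Equiv.Perm.subtypePerm] using this
  calc Fintype.card {π : Equiv.Perm α // ∀ y ∈ R, π y = y}
      ≤ Fintype.card (Equiv.Perm {x : α // x ∉ R}) := Fintype.card_le_of_injective _ hinj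
    _ = Nat.factorial (Fintype.card {x : α // x ∉ R}) := Fintype.card_perm
    _ = Nat.factorial (Fintype.card α - R.card) := by
        congr 1
        rw [Fintype.card_subtype_compl, Fintype.card_coe]

/-- Number of permutations mapping `P` into `Q`. -/
lemma card_perm_maps (P Q : Finset α) :
    (univ.filter fun σ : Equiv.Perm α => ∀ x ∈ P, σ x ∈ Q).card
      ≤ Q.card.descFactorial P.card * Nat.factorial (Fintype.card α - P.card) := by
  classical
  set E := univ.filter fun σ : Equiv.Perm α => ∀ x ∈ P, σ x ∈ Q with hE
  set Φ : Equiv.Perm α → (α → α) := fun σ x => if x ∈ P then σ x else x with hΦ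
  rw [Finset.card_eq_sum_card_image Φ E]
  -- bound each fiber
  have hfiber : ∀ g ∈ E.image Φ,
      (E.filter fun σ => Φ σ = g).card ≤ Nat.factorial (Fintype.card α - P.card) := by
    intro g hg
    rcases Finset.eq_empty_or_nonempty (E.filter fun σ => Φ σ = g) with h | ⟨σ₀, hσ₀⟩
    · simp [h]
    obtain ⟨hσ₀E, hσ₀g⟩ := Finset.mem_filter.mp hσ₀
    set R := P.image σ₀ with hR
    have hcard : R.card = P.card := Finset.card_image_of_injective _ σ₀.injective
    calc (E.filter fun σ => Φ σ = g).card
        ≤ (univ.filter fun π : Equiv.Perm α => ∀ y ∈ R, π y = y).card := by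
          apply Finset.card_le_card_of_injOn (fun σ => σ * σ₀⁻¹)
          · intro σ hσ
            obtain ⟨hσE, hσg⟩ := Finset.mem_filter.mp hσ
            simp only [Finset.coe_filter, Set.mem_setOf_eq, Finset.mem_filter, Finset.mem_univ, true_and]
            intro y hy
            obtain ⟨x, hxP, rfl⟩ := Finset.mem_image.mp hy
            have e1 : σ x = σ₀ x := by
              have h1 : Φ σ x = Φ σ₀ x := by rw [hσg, hσ₀g]
              simpa [hΦ, if_pos hxP] using h1
            simp [Equiv.Perm.mul_apply, e1]
          · intro a _ b _ hab
            have := congrArg (fun τ => τ * σ₀) hab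
            simpa [mul_assoc] using this
      _ ≤ Nat.factorial (Fintype.card α - R.card) := card_perm_fixing R
      _ = Nat.factorial (Fintype.card α - P.card) := by rw [hcard]
  -- bound the number of fibers
  have himg : (E.image Φ).card ≤ Q.card.descFactorial P.card := by
    have hsub : E.image Φ ⊆ univ.filter
        (fun h : α → α => Set.InjOn h ↑P ∧ (∀ x ∈ P, h x ∈ Q) ∧ ∀ x, x ∉ P → h x = x) := by
      intro g hg
      obtain ⟨σ, hσE, rfl⟩ := Finset.mem_image.mp hg
      obtain ⟨-, hσ⟩ := Finset.mem_filter.mp hσE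
      simp only [Finset.mem_filter, Finset.mem_univ, true_and]
      refine ⟨?_, ?_, ?_⟩
      · intro a ha b hb hab
        rw [Finset.mem_coe] at ha hb
        simp only [hΦ, if_pos ha, if_pos hb] at hab
        exact σ.injective hab
      · intro x hx
        simpa [hΦ, if_pos hx] using hσ x hx
      · intro x hx
        simp [hΦ, if_neg hx]
    refine le_trans (Finset.card_le_card hsub) ?_
    rw [← Fintype.card_subtype]
    have hinj : Function.Injective (fun h : {h : α → α //
        Set.InjOn h ↑P ∧ (∀ x ∈ P, h x ∈ Q) ∧ ∀ x, x ∉ P → h x = x} =>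
        (⟨fun x : ↑P => (⟨h.1 x, h.2.2.1 x x.2⟩ : ↑Q),
          fun a b hab => Subtype.ext (h.2.1 a.2 b.2 (congrArg Subtype.val hab))⟩ :
          ↑P ↪ ↑Q)) := by
      rintro ⟨h₁, hh₁⟩ ⟨h₂, hh₂⟩ heq
      refine Subtype.ext (funext fun x => ?_)
      by_cases hx : x ∈ P
      · have := congrArg (fun (e : ↑P ↪ ↑Q) => (e ⟨x, hx⟩ : ↑Q).1) heq
        exact this
      · simp only
        rw [hh₁.2.2 x hx, hh₂.2.2 x hx]
    calc Fintype.card {h : α → α // Set.InjOn h ↑P ∧ (∀ x ∈ P, h x ∈ Q) ∧ ∀ x, x ∉ P → h x = x}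
        ≤ Fintype.card (↑P ↪ ↑Q) := Fintype.card_le_of_injective _ hinj
      _ = Q.card.descFactorial P.card := by
          rw [Fintype.card_embedding_eq, Fintype.card_coe, Fintype.card_coe]
  calc ∑ g ∈ E.image Φ, (E.filter fun σ => Φ σ = g).card
      ≤ ∑ g ∈ E.image Φ, Nat.factorial (Fintype.card α - P.card) := Finset.sum_le_sum hfiber
    _ = (E.image Φ).card * Nat.factorial (Fintype.card α - P.card) := by rw [Finset.sum_const, smul_eq_mul]
    _ ≤ Q.card.descFactorial P.card * Nat.factorial (Fintype.card α - P.card) :=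
        Nat.mul_le_mul_right _ himg

/-- permutations with a prescribed value are at most `(card α - 1)!` many -/
lemma card_perm_eq (a b : α) :
    (univ.filter fun σ : Equiv.Perm α => σ a = b).card ≤ Nat.factorial (Fintype.card α - 1) := by
  classical
  have := card_perm_maps {a} ({b} : Finset α)
  simpa using this




/-- Lemma B: ratio bound for descending factorials. -/
lemma descFactorial_pow_le {q m : ℕ} (h : 20 * q ≤ 19 * m) :
    ∀ p, q.descFactorial p * 20 ^ p ≤ m.descFactorial p * 19 ^ p := by
  intro p
  induction p with
  | zero => simp
  | succ p ih =>
    rw [Nat.descFactorial_succ, Nat.descFactorial_succ, pow_succ, pow_succ]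
    calc (q - p) * q.descFactorial p * (20 ^ p * 20)
        = (20 * (q - p)) * (q.descFactorial p * 20 ^ p) := by ring
      _ ≤ (19 * (m - p)) * (m.descFactorial p * 19 ^ p) :=
          Nat.mul_le_mul (by omega) ih
      _ = (m - p) * m.descFactorial p * (19 ^ p * 19) := by ring

/-- the key counting bound, with exponent reduced to `t ≤ p`. -/
lemma key_count_bound {q m p t : ℕ} (hqm : 20 * q ≤ 19 * m) (hpm : p ≤ m) (htp : t ≤ p) :
    q.descFactorial p * Nat.factorial (m - p) * 20 ^ t
      ≤ Nat.factorial m * 19 ^ t := by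
  have h1 : q.descFactorial p * Nat.factorial (m - p) * 20 ^ p
      ≤ Nat.factorial m * 19 ^ p := by
    calc q.descFactorial p * Nat.factorial (m - p) * 20 ^ p
        = Nat.factorial (m - p) * (q.descFactorial p * 20 ^ p) := by ring
      _ ≤ Nat.factorial (m - p) * (m.descFactorial p * 19 ^ p) :=
          Nat.mul_le_mul_left _ (descFactorial_pow_le hqm p)
      _ = (Nat.factorial (m - p) * m.descFactorial p) * 19 ^ p := by ring
      _ = Nat.factorial m * 19 ^ p := by rw [Nat.factorial_mul_descFactorial hpm]
  have h2 : q.descFactorial p * Nat.factorial (m - p) * 20 ^ t * 20 ^ (p - t)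
      ≤ Nat.factorial m * 19 ^ t * 20 ^ (p - t) := by
    calc q.descFactorial p * Nat.factorial (m - p) * 20 ^ t * 20 ^ (p - t)
        = q.descFactorial p * Nat.factorial (m - p) * 20 ^ p := by
          rw [mul_assoc, ← pow_add]; congr 2; omega
      _ ≤ Nat.factorial m * 19 ^ p := h1
      _ = Nat.factorial m * (19 ^ t * 19 ^ (p - t)) := by rw [← pow_add]; congr 2; omega
      _ ≤ Nat.factorial m * (19 ^ t * 20 ^ (p - t)) := by
          apply Nat.mul_le_mul_left
          exact Nat.mul_le_mul_left _ (Nat.pow_le_pow_left (by norm_num) _)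
      _ = Nat.factorial m * 19 ^ t * 20 ^ (p - t) := by ring
  exact Nat.le_of_mul_le_mul_right h2 (Nat.pow_pos (by norm_num))

/-- `s ^ s ≤ 3 ^ s * s!` over the reals. -/
lemma pow_self_le_real : ∀ s : ℕ, (s : ℝ) ^ s ≤ 3 ^ s * (Nat.factorial s : ℝ) := by
  intro s
  induction s with
  | zero => simp
  | succ s ih =>
    rcases Nat.eq_zero_or_pos s with rfl | hs
    · norm_num
    have hsp : (0:ℝ) < s := by exact_mod_cast hs
    have key : ((s:ℝ) + 1) ^ s ≤ 3 * (s:ℝ) ^ s := by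
      have h3 : ((s:ℝ) + 1) ^ s = (s:ℝ) ^ s * (1 + 1/(s:ℝ)) ^ s := by
        rw [← mul_pow]
        congr 1
        field_simp
      have h0 : (0:ℝ) ≤ 1 + 1/(s:ℝ) := by positivity
      have h1 : (1 + 1/(s:ℝ)) ^ s ≤ Real.exp (1/(s:ℝ)) ^ s := by
        apply pow_le_pow_left₀ h0
        linarith [Real.add_one_le_exp (1/(s:ℝ))]
      have h2 : Real.exp (1/(s:ℝ)) ^ s = Real.exp 1 := by
        rw [← Real.exp_nat_mul]
        rw [mul_one_div, div_self (ne_of_gt hsp)]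
      have h4 : Real.exp 1 ≤ 3 := by
        have := Real.exp_one_lt_d9
        linarith
      have h5 : (1 + 1/(s:ℝ)) ^ s ≤ 3 := by
        rw [h2] at h1
        linarith
      rw [h3]
      have hss : (0:ℝ) ≤ (s:ℝ) ^ s := by positivity
      nlinarith
    have hcast : ((s + 1 : ℕ) : ℝ) = (s:ℝ) + 1 := by push_cast; ring
    calc ((s + 1 : ℕ) : ℝ) ^ (s + 1) = ((s:ℝ) + 1) * ((s:ℝ) + 1) ^ s := by
          rw [hcast, pow_succ]; ring
      _ ≤ ((s:ℝ) + 1) * (3 * (s:ℝ) ^ s) := by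
          apply mul_le_mul_of_nonneg_left key
          positivity
      _ ≤ ((s:ℝ) + 1) * (3 * (3 ^ s * (Nat.factorial s : ℝ))) := by
          apply mul_le_mul_of_nonneg_left _ (by positivity)
          nlinarith
      _ = 3 ^ (s + 1) * (((s:ℕ) + 1 : ℝ) * (Nat.factorial s : ℝ)) := by
          push_cast; ring
      _ = 3 ^ (s + 1) * (Nat.factorial (s + 1) : ℝ) := by
          rw [Nat.factorial_succ]; push_cast; ring

/-- `s ^ s ≤ 3 ^ s * s!` over ℕ. -/
lemma pow_self_le (s : ℕ) : s ^ s ≤ 3 ^ s * Nat.factorial s := by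
  have := pow_self_le_real s
  exact_mod_cast this

/-- binomial bound: `C(n,c) * c^c ≤ (3n)^c`. -/
lemma choose_mul_pow_le (n c : ℕ) : n.choose c * c ^ c ≤ (3 * n) ^ c := by
  calc n.choose c * c ^ c ≤ n.choose c * (3 ^ c * Nat.factorial c) :=
        Nat.mul_le_mul_left _ (pow_self_le c)
    _ = 3 ^ c * (Nat.factorial c * n.choose c) := by ring
    _ = 3 ^ c * n.descFactorial c := by rw [← Nat.descFactorial_eq_factorial_mul_choose]
    _ ≤ 3 ^ c * n ^ c := Nat.mul_le_mul_left _ (Nat.descFactorial_le_pow _ _)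
    _ = (3 * n) ^ c := by rw [mul_pow]

/-- monotonicity of `C(n,s) 2^s` for `s ≤ c` when `3c+1 ≤ n`. -/
lemma choose_two_mono (n : ℕ) : ∀ c, 3 * c + 1 ≤ n → ∀ s, s ≤ c →
    n.choose s * 2 ^ s ≤ n.choose c * 2 ^ c := by
  intro c
  induction c with
  | zero => intro _ s hs; interval_cases s; exact le_refl _
  | succ c ih =>
    intro hn s hs
    rcases Nat.lt_or_ge s (c+1) with h | h
    · have h1 : n.choose s * 2 ^ s ≤ n.choose c * 2 ^ c := ih (by omega) s (by omega)
      refine le_trans h1 ?_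
      have h2 : n.choose c ≤ n.choose (c+1) := by
        have he := Nat.choose_succ_right_eq n c
        have h3 : c + 1 ≤ n - c := by omega
        have h4 : n.choose c * (c+1) ≤ n.choose (c+1) * (c+1) := by
          calc n.choose c * (c+1) ≤ n.choose c * (n - c) := Nat.mul_le_mul_left _ h3
            _ = n.choose (c+1) * (c+1) := he.symm
        exact Nat.le_of_mul_le_mul_right h4 (by omega)
      calc n.choose c * 2 ^ c ≤ n.choose (c+1) * 2 ^ c := Nat.mul_le_mul_right _ h2
        _ ≤ n.choose (c+1) * 2 ^ (c+1) :=
            Nat.mul_le_mul_left _ (Nat.pow_le_pow_right (by norm_num) (by omega))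
    · have : s = c + 1 := by omega
      subst this
      exact le_refl _

/-- sum over small subsets of `2^|S|`. -/
lemma sum_two_pow_le (n c : ℕ) (hcn : 3 * c + 1 ≤ n) :
    ∑ S ∈ (Finset.univ : Finset (Fin n)).powerset.filter (fun S => S.card ≤ c), 2 ^ S.card
      ≤ (c + 1) * (n.choose c * 2 ^ c) := by
  classical
  have hset : (Finset.univ : Finset (Fin n)).powerset.filter (fun S => S.card ≤ c)
      = (Finset.range (c+1)).biUnion (fun s => Finset.powersetCard s Finset.univ) := by
    ext S
    simp only [Finset.mem_filter, Finset.mem_powerset, Finset.mem_biUnion, Finset.mem_range,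
      Finset.mem_powersetCard]
    constructor
    · rintro ⟨h1, h2⟩
      exact ⟨S.card, by omega, h1, rfl⟩
    · rintro ⟨s, hs, h1, rfl⟩
      exact ⟨h1, by omega⟩
  rw [hset, Finset.sum_biUnion]
  · have hb : ∀ s ∈ Finset.range (c+1),
        (∑ S ∈ Finset.powersetCard s (Finset.univ : Finset (Fin n)), 2 ^ S.card)
          ≤ n.choose c * 2 ^ c := by
      intro s hs
      rw [Finset.mem_range] at hs
      have : ∀ S ∈ Finset.powersetCard s (Finset.univ : Finset (Fin n)),
          2 ^ S.card = 2 ^ s := by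
        intro S hS
        rw [(Finset.mem_powersetCard.mp hS).2]
      rw [Finset.sum_congr rfl this, Finset.sum_const, Finset.card_powersetCard,
        Finset.card_univ, Fintype.card_fin, smul_eq_mul]
      exact choose_two_mono n c hcn s (by omega)
    calc ∑ s ∈ Finset.range (c+1), (∑ S ∈ Finset.powersetCard s (Finset.univ : Finset (Fin n)), 2 ^ S.card)
        ≤ ∑ s ∈ Finset.range (c+1), n.choose c * 2 ^ c := Finset.sum_le_sum hb
      _ = (c+1) * (n.choose c * 2 ^ c) := by rw [Finset.sum_const, Finset.card_range, smul_eq_mul]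
  · intro a _ b _ hab
    apply Finset.disjoint_left.mpr
    intro S hSa hSb
    rw [Finset.mem_powersetCard] at hSa hSb
    exact hab (by rw [← hSa.2, hSb.2])

/-- The final numeric inequality. -/
lemma final_numeric (m k : ℕ) (hm : 500000 ≤ m)
    (hk2 : ((2 * m : ℕ) : ℝ) / 100000 < (k : ℝ) + 1) (hk1 : (k : ℝ) ≤ ((2 * m : ℕ) : ℝ) / 100000) :
    2 * ((k + 2) * ((2*m).choose (k+1) * 2 ^ (k+1))) * 19 ^ (m / 10) ≤ 20 ^ (m / 10) := by
  set n := 2 * m with hn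
  set c := k + 1 with hc
  set t := m / 10 with ht
  -- basic real facts
  have hmR : (500000 : ℝ) ≤ (m : ℝ) := by exact_mod_cast hm
  have hnR : (n : ℝ) = 2 * (m : ℝ) := by rw [hn]; push_cast; ring
  have hcR : (n : ℝ) / 100000 < (c : ℝ) := by rw [hc]; push_cast; push_cast at hk2; linarith
  have hcR' : (c : ℝ) ≤ (n : ℝ) / 100000 + 1 := by rw [hc]; push_cast; linarith
  have hc1 : (1 : ℝ) ≤ (c : ℝ) := by rw [hc]; push_cast; linarith
  have htR : (m : ℝ) ≤ 10 * (t : ℝ) + 9 := by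
    have h1 : m ≤ 10 * t + 9 := by rw [ht]; omega
    exact_mod_cast h1
  have htR' : 10 * (t:ℝ) ≤ (m:ℝ) := by
    have : 10 * t ≤ m := by rw [ht]; omega
    exact_mod_cast this
  -- bound the binomial coefficient
  have hchoose : ((n.choose c : ℕ) : ℝ) ≤ 300000 ^ c := by
    have hcpos : (0:ℝ) < (c : ℝ) ^ c := by positivity
    have h1 : ((n.choose c : ℕ) : ℝ) * (c:ℝ) ^ c ≤ (3 * (n:ℝ)) ^ c := by
      have := choose_mul_pow_le n c
      have h1' : ((n.choose c * c ^ c : ℕ) : ℝ) ≤ (((3 * n) ^ c : ℕ) : ℝ) := by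
        exact_mod_cast this
      push_cast at h1'
      have hck : ((c:ℕ):ℝ) = (k:ℝ) + 1 := by rw [hc]; push_cast; ring
      rw [hck]
      rwa [hck] at h1'
    have h2 : (3 * (n:ℝ)) ^ c ≤ (300000 * (c:ℝ)) ^ c := by
      apply pow_le_pow_left₀ (by positivity)
      linarith
    have h3 : ((300000 : ℝ) * (c:ℝ)) ^ c = 300000 ^ c * (c:ℝ) ^ c := mul_pow _ _ _
    have h4 : ((n.choose c : ℕ) : ℝ) * (c:ℝ) ^ c ≤ 300000 ^ c * (c:ℝ) ^ c := by
      calc ((n.choose c : ℕ) : ℝ) * (c:ℝ) ^ c ≤ (3 * (n:ℝ)) ^ c := h1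
        _ ≤ (300000 * (c:ℝ)) ^ c := h2
        _ = 300000 ^ c * (c:ℝ) ^ c := h3
    exact le_of_mul_le_mul_right h4 hcpos
  -- exp bounds
  have hexp1 : (600000 : ℝ) ≤ Real.exp 14 := by
    have h1 : (2.7182818283 : ℝ) ^ (14:ℕ) ≤ Real.exp 1 ^ (14:ℕ) :=
      pow_le_pow_left₀ (by norm_num) (le_of_lt Real.exp_one_gt_d9) _
    have h2 : Real.exp 1 ^ (14:ℕ) = Real.exp 14 := by
      rw [← Real.exp_nat_mul]; norm_num
    have h3 : (600000 : ℝ) ≤ (2.7182818283 : ℝ) ^ (14:ℕ) := by norm_num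
    linarith
  have hexp2 : 2 * ((c : ℝ) + 1) ≤ Real.exp ((c:ℝ) + 2) := by
    have h1 : (c:ℝ) + 1 ≤ Real.exp (c:ℝ) := by
      have := Real.add_one_le_exp (c:ℝ)
      linarith
    have h2 : Real.exp ((c:ℝ) + 2) = Real.exp (c:ℝ) * Real.exp 2 := by
      rw [← Real.exp_add]
    have h3 : (4 : ℝ) ≤ Real.exp 2 := by
      have h4 : Real.exp 1 ^ (2:ℕ) = Real.exp 2 := by
        rw [← Real.exp_nat_mul]; norm_num
      nlinarith [Real.exp_one_gt_d9]
    have h5 : (0:ℝ) < Real.exp (c:ℝ) := Real.exp_pos _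
    nlinarith
  have hexp3 : Real.exp (1/20 : ℝ) ≤ 20 / 19 := by
    have h1 := Real.add_one_le_exp (-(1/20) : ℝ)
    have h2 : Real.exp (-(1/20):ℝ) = 1 / Real.exp (1/20 : ℝ) := by
      rw [Real.exp_neg]; ring
    have h3 : (0:ℝ) < Real.exp (1/20:ℝ) := Real.exp_pos _
    rw [h2] at h1
    have h4 : (19/20 : ℝ) ≤ 1 / Real.exp (1/20:ℝ) := by linarith
    rw [le_div_iff₀ h3] at h4
    nlinarith
  -- putting it together, in ℝ
  have main : (2 * ((k + 2) * ((n.choose c : ℕ) * 2 ^ c)) * 19 ^ t : ℝ) ≤ (20 ^ t : ℝ) := by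
    have hk2c : ((k : ℝ) + 2) = (c:ℝ) + 1 := by rw [hc]; push_cast; ring
    have step1 : (2 * ((k + 2) * ((n.choose c : ℕ) * 2 ^ c)) * 19 ^ t : ℝ)
        ≤ (2 * ((c:ℝ) + 1)) * (600000 ^ c) * 19 ^ t := by
      have h2c : ((n.choose c : ℕ) : ℝ) * 2 ^ c ≤ 600000 ^ c := by
        calc ((n.choose c : ℕ) : ℝ) * 2 ^ c ≤ 300000 ^ c * 2 ^ c := by
              apply mul_le_mul_of_nonneg_right hchoose (by positivity)
          _ = 600000 ^ c := by rw [← mul_pow]; norm_num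
      have h19 : (0:ℝ) ≤ 19 ^ t := by positivity
      have hck : (c:ℝ) = (k:ℝ) + 1 := by rw [hc]; push_cast; ring
      calc (2 * ((k + 2) * ((n.choose c : ℕ) * 2 ^ c)) * 19 ^ t : ℝ)
          = (2 * ((c:ℝ)+1)) * (((n.choose c : ℕ):ℝ) * 2 ^ c) * 19 ^ t := by
            rw [hck]; ring
        _ ≤ (2 * ((c:ℝ)+1)) * (600000 ^ c) * 19 ^ t := by
            apply mul_le_mul_of_nonneg_right _ h19
            apply mul_le_mul_of_nonneg_left h2c
            positivity
    have step2 : (2 * ((c:ℝ) + 1)) * (600000 ^ c) ≤ Real.exp (15 * (c:ℝ) + 2) := by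
      have h1 : (600000:ℝ) ^ c ≤ Real.exp 14 ^ c := pow_le_pow_left₀ (by norm_num) hexp1 _
      have h2 : Real.exp 14 ^ c = Real.exp (14 * c) := by
        rw [← Real.exp_nat_mul]
        congr 1; push_cast; ring
      have h3 : Real.exp ((c:ℝ) + 2) * Real.exp (14 * (c:ℝ)) = Real.exp (15 * (c:ℝ) + 2) := by
        rw [← Real.exp_add]; congr 1; ring
      have h4 : (0:ℝ) ≤ 2 * ((c:ℝ)+1) := by positivity
      calc (2 * ((c:ℝ) + 1)) * (600000 ^ c) ≤ Real.exp ((c:ℝ)+2) * Real.exp (14 * (c:ℝ)) := by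
            apply mul_le_mul hexp2 _ (by positivity) (le_of_lt (Real.exp_pos _))
            rw [← h2]
            exact_mod_cast h1
        _ = Real.exp (15 * (c:ℝ) + 2) := h3
    have step3 : Real.exp (15 * (c:ℝ) + 2) ≤ Real.exp ((t:ℝ) / 20) := by
      apply Real.exp_le_exp.mpr
      linarith
    have step4 : Real.exp ((t:ℝ)/20) ≤ (20/19 : ℝ) ^ t := by
      have h1 : Real.exp ((t:ℝ)/20) = Real.exp (1/20 : ℝ) ^ t := by
        rw [← Real.exp_nat_mul]
        congr 1; push_cast; ring
      rw [h1]
      exact pow_le_pow_left₀ (le_of_lt (Real.exp_pos _)) hexp3 t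
    have step5 : ((20:ℝ)/19) ^ t * 19 ^ t = 20 ^ t := by
      rw [← mul_pow]; norm_num
    have h19 : (0:ℝ) ≤ 19 ^ t := by positivity
    calc (2 * ((k + 2) * ((n.choose c : ℕ) * 2 ^ c)) * 19 ^ t : ℝ)
        ≤ (2 * ((c:ℝ) + 1)) * (600000 ^ c) * 19 ^ t := step1
      _ ≤ Real.exp (15 * (c:ℝ) + 2) * 19 ^ t := mul_le_mul_of_nonneg_right (by linarith [step2]) h19
      _ ≤ ((20:ℝ)/19) ^ t * 19 ^ t :=
          mul_le_mul_of_nonneg_right (le_trans step3 step4) h19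
      _ = 20 ^ t := step5
  exact_mod_cast main


section Graph

variable {m : ℕ} [NeZero m]

instance : NeZero (m + m) := ⟨by have := NeZero.pos m; omega⟩

lemma N_pos : 0 < m + m := NeZero.pos _

/-- the matching: left vertex `i` is paired with right vertex `m + σ i`. -/
noncomputable def pairF (σ : Equiv.Perm (Fin m)) : Fin (m + m) → Fin (m + m) :=
  fun v => if h : (v : ℕ) < m then Fin.natAdd m (σ ⟨v, h⟩)
    else Fin.castAdd m (σ.symm ⟨(v : ℕ) - m, by omega⟩)

lemma pairF_left (σ : Equiv.Perm (Fin m)) (i : Fin m) :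
    pairF σ (Fin.castAdd m i) = Fin.natAdd m (σ i) := by
  have h : ((Fin.castAdd m i : Fin (m + m)) : ℕ) < m := by simp
  have h2 : (⟨((Fin.castAdd m i : Fin (m + m)) : ℕ), h⟩ : Fin m) = i := by ext; simp
  rw [pairF, dif_pos h, h2]

lemma pairF_right (σ : Equiv.Perm (Fin m)) (j : Fin m) :
    pairF σ (Fin.natAdd m j) = Fin.castAdd m (σ.symm j) := by
  have h : ¬ ((Fin.natAdd m j : Fin (m + m)) : ℕ) < m := by simp
  have h2 : (⟨((Fin.natAdd m j : Fin (m + m)) : ℕ) - m, by simp⟩ : Fin m) = j := by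
    ext
    simp
  rw [pairF, dif_neg h, h2]

lemma eq_castAdd_or_natAdd (v : Fin (m + m)) :
    (∃ i : Fin m, v = Fin.castAdd m i) ∨ (∃ j : Fin m, v = Fin.natAdd m j) := by
  rcases Nat.lt_or_ge (v : ℕ) m with h | h
  · exact Or.inl ⟨⟨v, h⟩, by ext; simp⟩
  · refine Or.inr ⟨⟨(v : ℕ) - m, by omega⟩, ?_⟩
    ext
    simp [Fin.natAdd]
    omega

lemma pairF_invol (σ : Equiv.Perm (Fin m)) (v : Fin (m + m)) :
    pairF σ (pairF σ v) = v := by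
  rcases eq_castAdd_or_natAdd v with ⟨i, rfl⟩ | ⟨j, rfl⟩
  · rw [pairF_left, pairF_right, Equiv.symm_apply_apply]
  · rw [pairF_right, pairF_left, Equiv.apply_symm_apply]

lemma pairF_val_left (σ : Equiv.Perm (Fin m)) (v : Fin (m + m)) (h : (v:ℕ) < m) :
    m ≤ (pairF σ v : ℕ) := by
  rw [pairF, dif_pos h]
  simp

lemma pairF_val_right (σ : Equiv.Perm (Fin m)) (v : Fin (m + m)) (h : ¬ (v:ℕ) < m) :
    (pairF σ v : ℕ) < m := by
  rw [pairF, dif_neg h]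
  simp

lemma pairF_ne (σ : Equiv.Perm (Fin m)) (v : Fin (m + m)) : pairF σ v ≠ v := by
  intro h
  rcases Nat.lt_or_ge (v : ℕ) m with hv | hv
  · have := pairF_val_left σ v hv
    rw [h] at this
    omega
  · have := pairF_val_right σ v (by omega)
    rw [h] at this
    omega

/-- the 3-regular graph: a Hamilton cycle plus the matching `pairF σ`. -/
noncomputable def Gg (σ : Equiv.Perm (Fin m)) : SimpleGraph (Fin (m + m)) where
  Adj u v := u ≠ v ∧ (v = u + 1 ∨ u = v + 1 ∨ v = pairF σ u ∨ u = pairF σ v)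
  symm := by
    refine ⟨?_⟩
    rintro u v ⟨h1, h2⟩
    exact ⟨h1.symm, by tauto⟩
  loopless := ⟨fun u h => h.1 rfl⟩

lemma val_one' : ((1 : Fin (m + m)) : ℕ) = 1 % (m + m) := Fin.val_one' _

lemma val_add_one (hm : 2 ≤ m) (v : Fin (m + m)) :
    ((v + 1 : Fin (m + m)) : ℕ) = if (v : ℕ) = m + m - 1 then 0 else (v : ℕ) + 1 := by
  have h1 : ((1 : Fin (m + m)) : ℕ) = 1 := by rw [val_one']; exact Nat.mod_eq_of_lt (by omega)
  rw [Fin.val_add, h1]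
  have hv := v.isLt
  split_ifs with h
  · have h2 : (v:ℕ) + 1 = m + m := by omega
    rw [h2, Nat.mod_self]
  · exact Nat.mod_eq_of_lt (by omega)

lemma add_one_ne (hm : 2 ≤ m) (v : Fin (m + m)) : v + 1 ≠ v := by
  intro h
  have := val_add_one hm v
  rw [h] at this
  have hv := v.isLt
  split_ifs at this <;> omega

/-- the cyclic predecessor. -/
def prevV (v : Fin (m + m)) : Fin (m + m) :=
  ⟨((v : ℕ) + (m + m - 1)) % (m + m), Nat.mod_lt _ N_pos⟩

lemma prevV_val (hm : 2 ≤ m) (v : Fin (m + m)) :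
    ((prevV v : Fin (m+m)) : ℕ) = if (v : ℕ) = 0 then m + m - 1 else (v : ℕ) - 1 := by
  rw [prevV]
  have hv := v.isLt
  simp only
  split_ifs with h
  · rw [h, Nat.zero_add, Nat.mod_eq_of_lt] <;> omega
  · have : (v : ℕ) + (m + m - 1) = (m + m) + ((v:ℕ) - 1) := by omega
    rw [this, Nat.add_mod_left, Nat.mod_eq_of_lt]
    omega

lemma prevV_add_one (hm : 2 ≤ m) (v : Fin (m + m)) : prevV v + 1 = v := by
  apply Fin.ext
  rw [val_add_one hm, prevV_val hm]
  have hv := v.isLt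
  split_ifs with h1 h2 h3 <;> omega


def fzero : Fin m := ⟨0, NeZero.pos m⟩
def flast : Fin m := ⟨m - 1, by have := NeZero.pos m; omega⟩

/-- the matching avoids the two cycle edges crossing the halves -/
def Good (σ : Equiv.Perm (Fin m)) : Prop := σ fzero ≠ flast ∧ σ flast ≠ fzero

lemma pairF_val_left' (σ : Equiv.Perm (Fin m)) (v : Fin (m + m)) (h : (v:ℕ) < m) :
    (pairF σ v : ℕ) = m + (σ ⟨(v:ℕ), h⟩ : ℕ) := by
  rw [pairF, dif_pos h]
  simp [Fin.natAdd]

lemma pairF_val_right' (σ : Equiv.Perm (Fin m)) (v : Fin (m + m)) (h : ¬ (v:ℕ) < m) :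
    (pairF σ v : ℕ) = (σ.symm ⟨(v:ℕ) - m, by have := v.isLt; omega⟩ : ℕ) := by
  rw [pairF, dif_neg h]
  simp

lemma prevV_ne (hm : 2 ≤ m) (v : Fin (m + m)) : prevV v ≠ v := by
  intro h
  have h1 := prevV_add_one hm v
  rw [h] at h1
  exact add_one_ne hm v h1

lemma neighbor_d2 (hm : 3 ≤ m) (σ : Equiv.Perm (Fin m)) (hσ : Good σ) (v : Fin (m + m)) :
    v + 1 ≠ pairF σ v := by
  intro heq
  have hval : ((v + 1 : Fin (m+m)) : ℕ) = (pairF σ v : ℕ) := congrArg Fin.val heq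
  rw [val_add_one (by omega) v] at hval
  have hvlt := v.isLt
  rcases Nat.lt_or_ge (v:ℕ) m with hv | hv
  · rw [pairF_val_left' σ v hv] at hval
    have hs := (σ ⟨(v:ℕ), hv⟩).isLt
    have hif : ¬ ((v:ℕ) = m + m - 1) := by omega
    rw [if_neg hif] at hval
    have h1 : ((σ ⟨(v:ℕ), hv⟩ : Fin m) : ℕ) = 0 := by omega
    have h2 : (v:ℕ) = m - 1 := by omega
    have h3 : (⟨(v:ℕ), hv⟩ : Fin m) = flast := by
      apply Fin.ext; rw [h2]; rfl
    have h4 : σ flast = fzero := by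
      rw [← h3]; apply Fin.ext; rw [h1]; rfl
    exact hσ.2 h4
  · rw [pairF_val_right' σ v (by omega)] at hval
    have hs := (σ.symm ⟨(v:ℕ) - m, by omega⟩).isLt
    by_cases hif : (v:ℕ) = m + m - 1
    · rw [if_pos hif] at hval
      have h1 : (σ.symm ⟨(v:ℕ) - m, by omega⟩ : ℕ) = 0 := by omega
      have h2 : (⟨(v:ℕ) - m, by omega⟩ : Fin m) = flast := by
        apply Fin.ext
        simp only [flast]
        omega
      have h3 : σ.symm flast = fzero := by
        rw [← h2]; apply Fin.ext; rw [h1]; rfl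
      have h4 : σ fzero = flast := by
        rw [← h3, Equiv.apply_symm_apply]
      exact hσ.1 h4
    · rw [if_neg hif] at hval
      omega

lemma neighbor_d3 (hm : 3 ≤ m) (σ : Equiv.Perm (Fin m)) (hσ : Good σ) (v : Fin (m + m)) :
    prevV v ≠ pairF σ v := by
  intro heq
  have hval : ((prevV v : Fin (m+m)) : ℕ) = (pairF σ v : ℕ) := congrArg Fin.val heq
  rw [prevV_val (by omega) v] at hval
  have hvlt := v.isLt
  rcases Nat.lt_or_ge (v:ℕ) m with hv | hv
  · rw [pairF_val_left' σ v hv] at hval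
    have hs := (σ ⟨(v:ℕ), hv⟩).isLt
    by_cases hif : (v:ℕ) = 0
    · rw [if_pos hif] at hval
      have h1 : ((σ ⟨(v:ℕ), hv⟩ : Fin m) : ℕ) = m - 1 := by omega
      have h2 : (⟨(v:ℕ), hv⟩ : Fin m) = fzero := by
        apply Fin.ext; rw [hif]; rfl
      have h3 : σ fzero = flast := by
        rw [← h2]; apply Fin.ext; rw [h1]; rfl
      exact hσ.1 h3
    · rw [if_neg hif] at hval
      omega
  · rw [pairF_val_right' σ v (by omega)] at hval
    have hs := (σ.symm ⟨(v:ℕ) - m, by omega⟩).isLt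
    have hif : ¬ ((v:ℕ) = 0) := by omega
    rw [if_neg hif] at hval
    have h1 : (v:ℕ) = m := by omega
    have h2 : (σ.symm ⟨(v:ℕ) - m, by omega⟩ : ℕ) = m - 1 := by omega
    have h3 : (⟨(v:ℕ) - m, by omega⟩ : Fin m) = fzero := by
      apply Fin.ext
      simp only [fzero]
      omega
    have h4 : σ.symm fzero = flast := by
      rw [← h3]; apply Fin.ext; rw [h2]; rfl
    have h5 : σ flast = fzero := by rw [← h4, Equiv.apply_symm_apply]
    exact hσ.2 h5

lemma neighbor_d1 (hm : 3 ≤ m) (v : Fin (m + m)) : v + 1 ≠ prevV v := by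
  intro heq
  have hval : ((v + 1 : Fin (m+m)) : ℕ) = ((prevV v : Fin (m+m)) : ℕ) := congrArg Fin.val heq
  rw [val_add_one (by omega) v, prevV_val (by omega) v] at hval
  have hvlt := v.isLt
  split_ifs at hval <;> omega

lemma neighbor_filter (hm : 3 ≤ m) (σ : Equiv.Perm (Fin m)) (hσ : Good σ) (v : Fin (m + m)) :
    Finset.univ.filter (fun w => (Gg σ).Adj v w) = {v + 1, prevV v, pairF σ v} := by
  have hm2 : 2 ≤ m := by omega
  ext u
  simp only [Finset.mem_filter, Finset.mem_univ, true_and, Finset.mem_insert,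
    Finset.mem_singleton]
  constructor
  · rintro ⟨hne, h | h | h | h⟩
    · exact Or.inl h
    · refine Or.inr (Or.inl ?_)
      have h1 := prevV_add_one hm2 v
      have : u + 1 = prevV v + 1 := by rw [h1, ← h]
      exact add_right_cancel this
    · exact Or.inr (Or.inr h)
    · refine Or.inr (Or.inr ?_)
      have := congrArg (pairF σ) h
      rw [pairF_invol] at this
      exact this.symm
  · rintro (rfl | rfl | rfl)
    · exact ⟨fun h => add_one_ne hm2 v h.symm, Or.inl rfl⟩
    · exact ⟨fun h => prevV_ne hm2 v h.symm, Or.inr (Or.inl (prevV_add_one hm2 v).symm)⟩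
    · exact ⟨fun h => pairF_ne σ v h.symm, Or.inr (Or.inr (Or.inl rfl))⟩

lemma degree_three (hm : 3 ≤ m) (σ : Equiv.Perm (Fin m)) (hσ : Good σ) (v : Fin (m + m)) :
    (Finset.univ.filter (fun w => (Gg σ).Adj v w)).card = 3 := by
  rw [neighbor_filter hm σ hσ v]
  rw [Finset.card_insert_of_notMem, Finset.card_insert_of_notMem, Finset.card_singleton]
  · simp only [Finset.mem_singleton]
    exact neighbor_d3 hm σ hσ v
  · simp only [Finset.mem_insert, Finset.mem_singleton]
    push_neg
    exact ⟨neighbor_d1 hm v, neighbor_d2 hm σ hσ v⟩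

end Graph



section Cycle

variable {m : ℕ} [NeZero m]

lemma cast_nat_add_one (v : Fin (m + m)) (j : ℕ) :
    v + (((j + 1 : ℕ)) : Fin (m + m)) = (v + ((j : ℕ) : Fin (m + m))) + 1 := by
  push_cast
  ring

lemma adj_succ (hm : 2 ≤ m) (σ : Equiv.Perm (Fin m)) (a : Fin (m + m)) :
    (Gg σ).Adj a (a + 1) :=
  ⟨fun h => add_one_ne hm a h.symm, Or.inl rfl⟩

lemma run_reach (hm : 2 ≤ m) (σ : Equiv.Perm (Fin m)) (S : Finset (Fin (m + m)))
    (v : Fin (m + m)) :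
    ∀ l, 1 ≤ l → (∀ j, 1 ≤ j → j ≤ l → v + ((j : ℕ) : Fin (m + m)) ∉ S) →
    (Gdel (Gg σ) S).Reachable (v + 1) (v + ((l : ℕ) : Fin (m + m))) := by
  intro l hl
  induction l, hl using Nat.le_induction with
  | base =>
    intro _
    rw [Nat.cast_one]
  | succ l hl ih =>
    intro hS
    have h1 : (Gdel (Gg σ) S).Reachable (v + 1) (v + ((l : ℕ) : Fin (m + m))) :=
      ih (fun j hj1 hj2 => hS j hj1 (by omega))
    refine h1.trans (SimpleGraph.Adj.reachable ?_)
    rw [cast_nat_add_one]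
    exact ⟨adj_succ hm σ _, hS l (by omega) (by omega), by
      rw [← cast_nat_add_one]; exact hS (l+1) (by omega) (by omega)⟩

lemma exists_rot (v y : Fin (m + m)) (hvy : v ≠ y) :
    ∃ j : ℕ, 1 ≤ j ∧ j ≤ (m + m) - 1 ∧ v + ((j : ℕ) : Fin (m + m)) = y := by
  refine ⟨((y - v : Fin (m + m)) : ℕ), ?_, ?_, ?_⟩
  · have h1 : y - v ≠ 0 := sub_ne_zero.mpr (Ne.symm hvy)
    have h2 : ((y - v : Fin (m + m)) : ℕ) ≠ 0 := by
      intro h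
      exact h1 (Fin.ext (by rw [h]; simp))
    omega
  · have := (y - v : Fin (m + m)).isLt
    omega
  · rw [Fin.cast_val_eq_self]
    ring

lemma reach_all (hm : 2 ≤ m) (σ : Equiv.Perm (Fin m)) (x y : Fin (m + m)) :
    (Gdel (Gg σ) (∅ : Finset (Fin (m + m)))).Reachable x y := by
  rcases eq_or_ne x y with rfl | hxy
  · rfl
  obtain ⟨j, hj1, hj2, hj3⟩ := exists_rot x y hxy
  have h1 : (Gdel (Gg σ) (∅ : Finset (Fin (m + m)))).Adj x (x + 1) :=
    ⟨adj_succ hm σ x, by simp, by simp⟩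
  refine h1.reachable.trans ?_
  rw [← hj3]
  exact run_reach hm σ ∅ x j hj1 (fun _ _ _ => by simp)

/-- minimal backward distance from `x` to `S` -/
noncomputable def dS (S : Finset (Fin (m + m))) (x : Fin (m + m)) : ℕ :=
  if h : ∃ j : ℕ, 1 ≤ j ∧ j ≤ (m + m) - 1 ∧ x - ((j : ℕ) : Fin (m + m)) ∈ S
  then Nat.find h else 0

lemma dS_props (S : Finset (Fin (m + m))) (x : Fin (m + m)) (hx : x ∉ S) (hS : S.Nonempty) :
    1 ≤ dS S x ∧ dS S x ≤ (m + m) - 1 ∧ x - ((dS S x : ℕ) : Fin (m + m)) ∈ S ∧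
      (∀ j : ℕ, 1 ≤ j → j < dS S x → x - ((j : ℕ) : Fin (m + m)) ∉ S) := by
  obtain ⟨w, hw⟩ := hS
  have hwx : w ≠ x := fun h => hx (h ▸ hw)
  obtain ⟨j, hj1, hj2, hj3⟩ := exists_rot w x hwx
  have hex : ∃ j : ℕ, 1 ≤ j ∧ j ≤ (m + m) - 1 ∧ x - ((j : ℕ) : Fin (m + m)) ∈ S := by
    refine ⟨j, hj1, hj2, ?_⟩
    have : x - ((j : ℕ) : Fin (m + m)) = w := by rw [← hj3]; ring
    rw [this]
    exact hw
  rw [dS, dif_pos hex]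
  obtain ⟨h1, h2, h3⟩ := Nat.find_spec hex
  refine ⟨h1, h2, h3, ?_⟩
  intro i hi1 hi2 hmem
  exact Nat.find_min hex hi2 ⟨hi1, by omega, hmem⟩

/-- minimal forward distance from `v` to the complement of `S` -/
noncomputable def eS (S : Finset (Fin (m + m))) (v : Fin (m + m)) : ℕ :=
  if h : ∃ j : ℕ, 1 ≤ j ∧ j ≤ (m + m) - 1 ∧ v + ((j : ℕ) : Fin (m + m)) ∉ S
  then Nat.find h else 0

noncomputable def nx (S : Finset (Fin (m + m))) (v : Fin (m + m)) : Fin (m + m) :=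
  v + ((eS S v : ℕ) : Fin (m + m))

lemma nx_eq_succ (S : Finset (Fin (m + m))) (v : Fin (m + m)) (h1 : v + 1 ∉ S) :
    nx S v = v + 1 := by
  have hex : ∃ j : ℕ, 1 ≤ j ∧ j ≤ (m + m) - 1 ∧ v + ((j : ℕ) : Fin (m + m)) ∉ S := by
    refine ⟨1, le_refl _, ?_, ?_⟩
    · have := NeZero.pos m; omega
    · rw [Nat.cast_one]; exact h1
  have hfind : Nat.find hex = 1 := by
    rw [Nat.find_eq_iff]
    refine ⟨⟨le_refl _, ?_, by rw [Nat.cast_one]; exact h1⟩, ?_⟩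
    · have := NeZero.pos m; omega
    · intro j hj
      intro hcon
      omega
  rw [nx, eS, dif_pos hex, hfind, Nat.cast_one]

/-- greedy subfamily with prescribed sum window -/
lemma greedy {ι : Type*} [DecidableEq ι] (l : Finset ι) (f : ι → ℕ) (M x : ℕ)
    (hf : ∀ i ∈ l, f i ≤ M) (hx : x ≤ ∑ i ∈ l, f i) :
    ∃ u ⊆ l, x ≤ ∑ i ∈ u, f i ∧ ∑ i ∈ u, f i ≤ x + M := by
  classical
  induction l using Finset.induction_on with
  | empty =>
    refine ⟨∅, Finset.Subset.refl _, ?_, ?_⟩ <;> simp_all <;> omega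
  | @insert a s ha ih =>
    rw [Finset.sum_insert ha] at hx
    by_cases hx' : x ≤ ∑ i ∈ s, f i
    · obtain ⟨u, hu1, hu2, hu3⟩ := ih (fun i hi => hf i (Finset.mem_insert_of_mem hi)) hx'
      exact ⟨u, hu1.trans (Finset.subset_insert _ _), hu2, hu3⟩
    · refine ⟨insert a s, Finset.Subset.refl _, ?_, ?_⟩
      · rw [Finset.sum_insert ha]; omega
      · rw [Finset.sum_insert ha]
        have hfa := hf a (Finset.mem_insert_self _ _)
        omega

/-- halves of a vertex set -/
noncomputable def leftIdx (X : Finset (Fin (m + m))) : Finset (Fin m) :=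
  Finset.univ.filter (fun i => Fin.castAdd m i ∈ X)

noncomputable def rightIdx (X : Finset (Fin (m + m))) : Finset (Fin m) :=
  Finset.univ.filter (fun i => Fin.natAdd m i ∈ X)

lemma leftIdx_card (X : Finset (Fin (m + m))) :
    (leftIdx X).card = (X.filter (fun v : Fin (m + m) => v.val < m)).card := by
  apply Finset.card_bij (fun i _ => Fin.castAdd m i)
  · intro i hi
    rw [Finset.mem_filter]
    rw [leftIdx, Finset.mem_filter] at hi
    exact ⟨hi.2, by simp⟩
  · intro i _ j _ h
    exact Fin.castAdd_injective _ _ h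
  · intro v hv
    rw [Finset.mem_filter] at hv
    refine ⟨⟨(v : ℕ), hv.2⟩, ?_, ?_⟩
    · rw [leftIdx, Finset.mem_filter]
      have : Fin.castAdd m ⟨(v:ℕ), hv.2⟩ = v := by ext; simp
      exact ⟨Finset.mem_univ _, by rw [this]; exact hv.1⟩
    · ext; simp

lemma rightIdx_card (X : Finset (Fin (m + m))) :
    (rightIdx X).card = (X.filter (fun v : Fin (m + m) => ¬ (v.val < m))).card := by
  apply Finset.card_bij (fun j _ => Fin.natAdd m j)
  · intro j hj
    rw [Finset.mem_filter]
    rw [rightIdx, Finset.mem_filter] at hj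
    exact ⟨hj.2, by simp⟩
  · intro i _ j _ h
    have h2 := congrArg Fin.val h
    simp only [Fin.natAdd] at h2
    exact Fin.ext (by omega)
  · intro v hv
    rw [Finset.mem_filter] at hv
    have hge : m ≤ (v : ℕ) := by omega
    refine ⟨⟨(v : ℕ) - m, by have := v.isLt; omega⟩, ?_, ?_⟩
    · rw [rightIdx, Finset.mem_filter]
      have : Fin.natAdd m ⟨(v:ℕ) - m, by have := v.isLt; omega⟩ = v := by
        ext; simp; omega
      exact ⟨Finset.mem_univ _, by rw [this]; exact hv.1⟩
    · ext; simp; omega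

lemma halves_card (X : Finset (Fin (m + m))) :
    X.card = (leftIdx X).card + (rightIdx X).card := by
  rw [leftIdx_card, rightIdx_card]
  exact (Finset.card_filter_add_card_filter_not (fun v : Fin (m + m) => v.val < m)).symm

lemma leftIdx_union (X Y : Finset (Fin (m + m))) :
    leftIdx (X ∪ Y) = leftIdx X ∪ leftIdx Y := by
  ext i
  simp [leftIdx, Finset.mem_union, Finset.mem_filter]

lemma rightIdx_union (X Y : Finset (Fin (m + m))) :
    rightIdx (X ∪ Y) = rightIdx X ∪ rightIdx Y := by
  ext i
  simp [rightIdx, Finset.mem_union, Finset.mem_filter]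

lemma leftIdx_disj {X Y : Finset (Fin (m + m))} (h : Disjoint X Y) :
    Disjoint (leftIdx X) (leftIdx Y) := by
  rw [Finset.disjoint_left]
  intro i hi1 hi2
  rw [leftIdx, Finset.mem_filter] at hi1 hi2
  exact (Finset.disjoint_left.mp h) hi1.2 hi2.2

lemma rightIdx_disj {X Y : Finset (Fin (m + m))} (h : Disjoint X Y) :
    Disjoint (rightIdx X) (rightIdx Y) := by
  rw [Finset.disjoint_left]
  intro i hi1 hi2
  rw [rightIdx, Finset.mem_filter] at hi1 hi2
  exact (Finset.disjoint_left.mp h) hi1.2 hi2.2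

lemma leftIdx_univ : leftIdx (Finset.univ : Finset (Fin (m + m))) = Finset.univ := by
  ext i; simp [leftIdx]

lemma rightIdx_univ : rightIdx (Finset.univ : Finset (Fin (m + m))) = Finset.univ := by
  ext i; simp [rightIdx]

end Cycle

section Certificates

variable {m : ℕ} [NeZero m]

/-- the predecessor anchor of `x` in the cyclic order -/
noncomputable def pvf (S : Finset (Fin (m + m))) (x : Fin (m + m)) : Fin (m + m) :=
  x - ((dS S x : ℕ) : Fin (m + m))

/-- candidate "A-side" reconstructed from the certificate `(S, T)` -/
noncomputable def Aset (S T : Finset (Fin (m + m))) : Finset (Fin (m + m)) :=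
  (Finset.univ \ S).filter (fun x => pvf S x ∈ T)

noncomputable def Bset (S T : Finset (Fin (m + m))) : Finset (Fin (m + m)) :=
  (Finset.univ \ S) \ Aset S T

/-- permutations mapping `P` into `Q` -/
noncomputable def mapsSet (P Q : Finset (Fin m)) : Finset (Equiv.Perm (Fin m)) :=
  Finset.univ.filter (fun σ : Equiv.Perm (Fin m) => ∀ i ∈ P, σ i ∈ Q)

noncomputable def BadSet (S T : Finset (Fin (m + m))) : Finset (Equiv.Perm (Fin m)) :=
  if m / 10 ≤ (leftIdx (Aset S T)).card ∧ m / 10 ≤ (rightIdx (Bset S T)).card then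
    mapsSet (leftIdx (Aset S T)) (Finset.univ \ rightIdx (Bset S T))
  else if m / 10 ≤ (leftIdx (Bset S T)).card ∧ m / 10 ≤ (rightIdx (Aset S T)).card then
    mapsSet (leftIdx (Bset S T)) (Finset.univ \ rightIdx (Aset S T))
  else ∅

lemma mapsSet_card_bound (hm : 500000 ≤ m) (P R : Finset (Fin m))
    (hp : m / 10 ≤ P.card) (hr : m / 10 ≤ R.card) :
    (mapsSet P (Finset.univ \ R)).card * 20 ^ (m / 10)
      ≤ Nat.factorial m * 19 ^ (m / 10) := by
  rw [mapsSet]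
  have hb := card_perm_maps P (Finset.univ \ R)
  rw [Fintype.card_fin] at hb
  have hq : (Finset.univ \ R).card = m - R.card := by
    rw [Finset.card_sdiff_of_subset (Finset.subset_univ _), Finset.card_univ, Fintype.card_fin]
  have hrm : R.card ≤ m := by
    have := Finset.card_le_card (Finset.subset_univ R)
    rwa [Finset.card_univ, Fintype.card_fin] at this
  have hpm : P.card ≤ m := by
    have := Finset.card_le_card (Finset.subset_univ P)
    rwa [Finset.card_univ, Fintype.card_fin] at this
  have hqm : 20 * (Finset.univ \ R).card ≤ 19 * m := by
    rw [hq]; omega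
  calc (Finset.univ.filter (fun σ : Equiv.Perm (Fin m) => ∀ i ∈ P, σ i ∈ Finset.univ \ R)).card * 20 ^ (m / 10)
      ≤ ((Finset.univ \ R).card.descFactorial P.card * Nat.factorial (m - P.card)) * 20 ^ (m/10) := by
        refine Nat.mul_le_mul_right _ (le_trans (le_of_eq ?_) hb)
        congr 1
        ext σ
        simp only [Finset.mem_filter]
    _ ≤ Nat.factorial m * 19 ^ (m / 10) := key_count_bound hqm hpm hp

lemma badSet_card_bound (hm : 500000 ≤ m) (S T : Finset (Fin (m + m))) :
    (BadSet S T).card * 20 ^ (m / 10) ≤ Nat.factorial m * 19 ^ (m / 10) := by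
  rw [BadSet]
  split_ifs with h1 h2
  · exact mapsSet_card_bound hm _ _ h1.1 h1.2
  · exact mapsSet_card_bound hm _ _ h2.1 h2.2
  · simp only [Finset.card_empty, Nat.zero_mul]
    exact Nat.zero_le _

end Certificates

section CompHelpers

variable {V : Type*} [Fintype V]

lemma compF_closed (G : SimpleGraph V) (S : Finset V) {v y z : V}
    (hy : y ∈ compF G S v) (hz : (Gdel G S).Reachable y z) : z ∈ compF G S v :=
  (mem_compF _ _ _ _).mpr (((mem_compF _ _ _ _).mp hy).trans hz)

lemma compF_eq (G : SimpleGraph V) (S : Finset V) {v w z : V}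
    (hv : z ∈ compF G S v) (hw : z ∈ compF G S w) : compF G S v = compF G S w := by
  have h1 := (mem_compF _ _ _ _).mp hv
  have h2 := (mem_compF _ _ _ _).mp hw
  ext u
  simp only [mem_compF]
  constructor
  · intro h
    exact h2.trans (h1.symm.trans h)
  · intro h
    exact h1.trans (h2.symm.trans h)

lemma compF_subset [DecidableEq V] (G : SimpleGraph V) (S : Finset V) {v : V} (hv : v ∉ S) :
    compF G S v ⊆ Finset.univ \ S := by
  intro u hu
  rw [Finset.mem_sdiff]
  exact ⟨Finset.mem_univ _, reach_not_mem G S ((mem_compF _ _ _ _).mp hu) hv⟩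

end CompHelpers

section Cover

variable {m : ℕ} [NeZero m]

lemma pvf_def (S : Finset (Fin (m + m))) (x : Fin (m + m)) :
    pvf S x = x - ((dS S x : ℕ) : Fin (m + m)) := rfl

lemma bad_cover (hm : 500000 ≤ m) (σ : Equiv.Perm (Fin m)) (S : Finset (Fin (m + m)))
    (c : ℕ) (hsc : S.card ≤ c) (hc100 : 100 * c ≤ m)
    (hP : ∀ v, v ∉ S → 2 * (compF (Gg σ) S v).card ≤ m + m) :
    ∃ T, T ⊆ S ∧ σ ∈ BadSet S T := by
  classical
  have hm2 : 2 ≤ m := by omega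
  set comps : Finset (Finset (Fin (m + m))) :=
    (Finset.univ \ S).image (fun v => compF (Gg σ) S v) with hcomps
  have hmem_comps : ∀ X ∈ comps, ∃ v, v ∉ S ∧ X = compF (Gg σ) S v := by
    intro X hX
    obtain ⟨v, hv, rfl⟩ := Finset.mem_image.mp hX
    exact ⟨v, (Finset.mem_sdiff.mp hv).2, rfl⟩
  have hdisj : ∀ X ∈ comps, ∀ Y ∈ comps, X ≠ Y → Disjoint X Y := by
    intro X hX Y hY hXY
    obtain ⟨v, hv, rfl⟩ := hmem_comps X hX
    obtain ⟨w, hw, rfl⟩ := hmem_comps Y hY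
    rw [Finset.disjoint_left]
    intro z hzv hzw
    exact hXY (compF_eq _ _ hzv hzw)
  have hcover : comps.biUnion (fun X => X) = Finset.univ \ S := by
    apply Finset.Subset.antisymm
    · intro z hz
      rw [Finset.mem_biUnion] at hz
      obtain ⟨X, hX, hzX⟩ := hz
      obtain ⟨v, hv, rfl⟩ := hmem_comps X hX
      exact compF_subset _ _ hv hzX
    · intro v hv
      rw [Finset.mem_biUnion]
      exact ⟨compF (Gg σ) S v, Finset.mem_image_of_mem _ hv, mem_compF_self _ _ _⟩
  have hsum : ∑ X ∈ comps, X.card = (m + m) - S.card := by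
    rw [← Finset.card_biUnion hdisj, hcover, Finset.card_sdiff_of_subset (Finset.subset_univ _),
      Finset.card_univ, Fintype.card_fin]
  have hbound : ∀ X ∈ comps, X.card ≤ m := by
    intro X hX
    obtain ⟨v, hv, rfl⟩ := hmem_comps X hX
    have := hP v hv
    omega
  have hx : m / 2 ≤ ∑ X ∈ comps, X.card := by rw [hsum]; omega
  obtain ⟨chosen, hchosen_sub, hge, hle⟩ :=
    greedy comps (fun X => X.card) m (m / 2) hbound hx
  set A : Finset (Fin (m + m)) := chosen.biUnion (fun X => X) with hA
  have hdisj' : ∀ X ∈ chosen, ∀ Y ∈ chosen, X ≠ Y → Disjoint X Y :=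
    fun X hX Y hY => hdisj X (hchosen_sub hX) Y (hchosen_sub hY)
  have hAcard : A.card = ∑ X ∈ chosen, X.card := Finset.card_biUnion hdisj'
  have hAsub : A ⊆ Finset.univ \ S := by
    rw [hA, ← hcover]
    exact Finset.biUnion_subset_biUnion_of_subset_left _ hchosen_sub
  set B : Finset (Fin (m + m)) := (Finset.univ \ S) \ A with hB
  have hBA : Disjoint B A := Finset.sdiff_disjoint
  have hBcard : B.card = ((m + m) - S.card) - A.card := by
    rw [hB, Finset.card_sdiff_of_subset hAsub, Finset.card_sdiff_of_subset (Finset.subset_univ _),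
      Finset.card_univ, Fintype.card_fin]
  have hAclosed : ∀ x ∈ A, ∀ z, (Gdel (Gg σ) S).Reachable x z → z ∈ A := by
    intro x hx z hz
    rw [hA, Finset.mem_biUnion] at hx ⊢
    obtain ⟨X, hX, hxX⟩ := hx
    refine ⟨X, hX, ?_⟩
    obtain ⟨v, hv, rfl⟩ := hmem_comps X (hchosen_sub hX)
    exact compF_closed _ _ hxX hz
  have hBclosed : ∀ x ∈ B, ∀ z, (Gdel (Gg σ) S).Reachable x z → z ∈ B := by
    intro x hx z hz
    have hxS : x ∉ S := (Finset.mem_sdiff.mp (Finset.mem_sdiff.mp hx).1).2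
    have hzS : z ∉ S := reach_not_mem _ _ hz hxS
    rw [hB, Finset.mem_sdiff]
    refine ⟨Finset.mem_sdiff.mpr ⟨Finset.mem_univ _, hzS⟩, ?_⟩
    intro hzA
    have hxA : x ∈ A := hAclosed z hzA x hz.symm
    exact (Finset.mem_sdiff.mp hx).2 hxA
  have haA : m / 2 ≤ A.card ∧ A.card ≤ m / 2 + m := by rw [hAcard]; exact ⟨hge, hle⟩
  have hSne : S.Nonempty := by
    rw [Finset.nonempty_iff_ne_empty]
    intro hSe
    have hApos : 0 < A.card := by omega
    have hBpos : 0 < B.card := by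
      rw [hBcard, hSe]
      simp only [Finset.card_empty]
      omega
    obtain ⟨x, hxA⟩ := Finset.card_pos.mp hApos
    obtain ⟨y, hyB⟩ := Finset.card_pos.mp hBpos
    have hreach : (Gdel (Gg σ) S).Reachable x y := by
      rw [hSe]
      exact reach_all hm2 σ x y
    have hyA : y ∈ A := hAclosed x hxA y hreach
    exact (Finset.disjoint_left.mp hBA) hyB hyA
  set T : Finset (Fin (m + m)) := S.filter (fun w => nx S w ∈ A) with hT
  -- recovery: Aset S T = A
  have hAset : Aset S T = A := by
    ext x
    by_cases hxS : x ∈ S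
    · constructor
      · intro hmem
        rw [Aset, Finset.mem_filter, Finset.mem_sdiff] at hmem
        exact absurd hxS hmem.1.2
      · intro hmem
        exact absurd hxS (Finset.mem_sdiff.mp (hAsub hmem)).2
    · obtain ⟨hd1, hd2, hd3, hdmin⟩ := dS_props S x hxS hSne
      set d := dS S x with hd
      set v := pvf S x with hv
      have hvS : v ∈ S := hd3
      have hcast : ((d : ℕ) : Fin (m + m)) = (((d - 1 : ℕ)) : Fin (m + m)) + 1 := by
        have hd' : d = (d - 1) + 1 := by omega
        conv_lhs => rw [hd']
        push_cast
        ring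
      have hv1 : v + 1 = x - (((d - 1 : ℕ)) : Fin (m + m)) := by
        rw [hv, pvf_def, ← hd, hcast]
        ring
      have hv1nS : v + 1 ∉ S := by
        rcases Nat.eq_or_lt_of_le hd1 with h1 | h1
        · have hd0 : d - 1 = 0 := by omega
          rw [hv1, hd0]
          simpa using hxS
        · rw [hv1]
          exact hdmin (d - 1) (by omega) (by omega)
      have hnx : nx S v = v + 1 := nx_eq_succ S v hv1nS
      have hreach : (Gdel (Gg σ) S).Reachable (v + 1) x := by
        have hcond : ∀ j, 1 ≤ j → j ≤ d → v + ((j : ℕ) : Fin (m + m)) ∉ S := by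
          intro j hj1 hj2
          have hsub : ((d - j : ℕ) : Fin (m + m)) = ((d : ℕ) : Fin (m + m)) - ((j : ℕ) : Fin (m + m)) :=
            Nat.cast_sub hj2
          have hvj : v + ((j : ℕ) : Fin (m + m)) = x - (((d - j : ℕ)) : Fin (m + m)) := by
            rw [hv, pvf_def, ← hd, hsub]
            ring
          rcases Nat.eq_or_lt_of_le hj2 with h1 | h1
          · have : d - j = 0 := by omega
            rw [hvj, this]
            simpa using hxS
          · rw [hvj]
            exact hdmin (d - j) (by omega) (by omega)
        have hrun := run_reach hm2 σ S v d hd1 hcond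
        have hvd : v + ((d : ℕ) : Fin (m + m)) = x := by
          rw [hv, pvf_def, ← hd]
          ring
        rwa [hvd] at hrun
      have hxv : x ∈ A ↔ v + 1 ∈ A := by
        constructor
        · intro hxA
          by_contra hvA
          have hv1B : v + 1 ∈ B := by
            rw [hB, Finset.mem_sdiff, Finset.mem_sdiff]
            exact ⟨⟨Finset.mem_univ _, hv1nS⟩, hvA⟩
          have hxB : x ∈ B := hBclosed _ hv1B x hreach
          exact (Finset.disjoint_left.mp hBA) hxB hxA
        · intro hv1A
          exact hAclosed _ hv1A x hreach
      constructor
      · intro hmem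
        rw [Aset, Finset.mem_filter] at hmem
        have hvT := hmem.2
        rw [hT, Finset.mem_filter] at hvT
        rw [← hv] at hvT
        have := hvT.2
        rw [hnx] at this
        exact hxv.mpr this
      · intro hxA
        rw [Aset, Finset.mem_filter, Finset.mem_sdiff]
        refine ⟨⟨Finset.mem_univ _, hxS⟩, ?_⟩
        rw [hT, Finset.mem_filter, ← hv, hnx]
        exact ⟨hvS, hxv.mp hxA⟩
  have hBset : Bset S T = B := by
    rw [Bset, hAset, hB]
  -- crossing conditions
  have hne_lr : ∀ (i j : Fin m), Fin.castAdd m i ≠ Fin.natAdd m j := by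
    intro i j h
    have h2 := congrArg Fin.val h
    simp only [Fin.castAdd, Fin.natAdd, Fin.castLE] at h2
    have := i.isLt
    omega
  have hcrossA : ∀ i ∈ leftIdx A, σ i ∈ Finset.univ \ rightIdx B := by
    intro i hi
    rw [leftIdx, Finset.mem_filter] at hi
    rw [Finset.mem_sdiff]
    refine ⟨Finset.mem_univ _, ?_⟩
    intro hmemB
    rw [rightIdx, Finset.mem_filter] at hmemB
    have hadj : (Gg σ).Adj (Fin.castAdd m i) (Fin.natAdd m (σ i)) :=
      ⟨hne_lr i (σ i), Or.inr (Or.inr (Or.inl (pairF_left σ i).symm))⟩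
    have hreach2 : (Gdel (Gg σ) S).Reachable (Fin.castAdd m i) (Fin.natAdd m (σ i)) :=
      SimpleGraph.Adj.reachable ⟨hadj, (Finset.mem_sdiff.mp (hAsub hi.2)).2,
        (Finset.mem_sdiff.mp (Finset.mem_sdiff.mp hmemB.2).1).2⟩
    have : Fin.natAdd m (σ i) ∈ A := hAclosed _ hi.2 _ hreach2
    exact (Finset.disjoint_left.mp hBA) hmemB.2 this
  have hcrossB : ∀ i ∈ leftIdx B, σ i ∈ Finset.univ \ rightIdx A := by
    intro i hi
    rw [leftIdx, Finset.mem_filter] at hi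
    rw [Finset.mem_sdiff]
    refine ⟨Finset.mem_univ _, ?_⟩
    intro hmemA
    rw [rightIdx, Finset.mem_filter] at hmemA
    have hadj : (Gg σ).Adj (Fin.castAdd m i) (Fin.natAdd m (σ i)) :=
      ⟨hne_lr i (σ i), Or.inr (Or.inr (Or.inl (pairF_left σ i).symm))⟩
    have hreach2 : (Gdel (Gg σ) S).Reachable (Fin.castAdd m i) (Fin.natAdd m (σ i)) :=
      SimpleGraph.Adj.reachable ⟨hadj, (Finset.mem_sdiff.mp (Finset.mem_sdiff.mp hi.2).1).2,
        (Finset.mem_sdiff.mp (hAsub hmemA.2)).2⟩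
    have : Fin.natAdd m (σ i) ∈ B := hBclosed _ hi.2 _ hreach2
    exact (Finset.disjoint_left.mp hBA) this hmemA.2
  -- size bookkeeping
  have hABS_disjAS : Disjoint A S := by
    rw [Finset.disjoint_left]
    intro a haA haS
    exact (Finset.mem_sdiff.mp (hAsub haA)).2 haS
  have hABS_disjBS : Disjoint B S := by
    rw [Finset.disjoint_left]
    intro a haB haS
    exact (Finset.mem_sdiff.mp (Finset.mem_sdiff.mp haB).1).2 haS
  have hUnion : A ∪ B ∪ S = Finset.univ := by
    ext z
    simp only [Finset.mem_union, Finset.mem_univ, iff_true]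
    by_cases hzS : z ∈ S
    · exact Or.inr hzS
    · by_cases hzA : z ∈ A
      · exact Or.inl (Or.inl hzA)
      · refine Or.inl (Or.inr ?_)
        rw [hB, Finset.mem_sdiff, Finset.mem_sdiff]
        exact ⟨⟨Finset.mem_univ _, hzS⟩, hzA⟩
  have hAB : Disjoint A B := hBA.symm
  have eA := halves_card A
  have eB := halves_card B
  have eS' := halves_card S
  have eL : (leftIdx A).card + (leftIdx B).card + (leftIdx S).card = m := by
    have h1 : leftIdx (A ∪ B ∪ S) = leftIdx A ∪ leftIdx B ∪ leftIdx S := by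
      rw [leftIdx_union, leftIdx_union]
    rw [hUnion, leftIdx_univ] at h1
    have hd12 : Disjoint (leftIdx A ∪ leftIdx B) (leftIdx S) := by
      rw [Finset.disjoint_union_left]
      exact ⟨leftIdx_disj hABS_disjAS, leftIdx_disj hABS_disjBS⟩
    have hdAB' : Disjoint (leftIdx A) (leftIdx B) := leftIdx_disj hAB
    have h2 : (leftIdx A ∪ leftIdx B ∪ leftIdx S).card
        = (leftIdx A).card + (leftIdx B).card + (leftIdx S).card := by
      rw [Finset.card_union_of_disjoint hd12, Finset.card_union_of_disjoint hdAB']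
    rw [← h2, ← h1, Finset.card_univ, Fintype.card_fin]
  have eR : (rightIdx A).card + (rightIdx B).card + (rightIdx S).card = m := by
    have h1 : rightIdx (A ∪ B ∪ S) = rightIdx A ∪ rightIdx B ∪ rightIdx S := by
      rw [rightIdx_union, rightIdx_union]
    rw [hUnion, rightIdx_univ] at h1
    have hd12 : Disjoint (rightIdx A ∪ rightIdx B) (rightIdx S) := by
      rw [Finset.disjoint_union_left]
      exact ⟨rightIdx_disj hABS_disjAS, rightIdx_disj hABS_disjBS⟩
    have hdAB' : Disjoint (rightIdx A) (rightIdx B) := rightIdx_disj hAB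
    have h2 : (rightIdx A ∪ rightIdx B ∪ rightIdx S).card
        = (rightIdx A).card + (rightIdx B).card + (rightIdx S).card := by
      rw [Finset.card_union_of_disjoint hd12, Finset.card_union_of_disjoint hdAB']
    rw [← h2, ← h1, Finset.card_univ, Fintype.card_fin]
  have hcases : (m / 10 ≤ (leftIdx A).card ∧ m / 10 ≤ (rightIdx B).card)
      ∨ (m / 10 ≤ (leftIdx B).card ∧ m / 10 ≤ (rightIdx A).card) := by
    omega
  refine ⟨T, Finset.filter_subset _ _, ?_⟩
  rw [BadSet, hAset, hBset]
  split_ifs with h1 h2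
  · rw [mapsSet, Finset.mem_filter]
    exact ⟨Finset.mem_univ _, hcrossA⟩
  · rw [mapsSet, Finset.mem_filter]
    exact ⟨Finset.mem_univ _, hcrossB⟩
  · exfalso
    tauto

end Cover

section Master

variable {m : ℕ} [NeZero m]

lemma card_not_good (hm1 : 1 ≤ m) :
    (Finset.univ.filter (fun σ : Equiv.Perm (Fin m) => ¬ Good σ)).card
      ≤ 2 * Nat.factorial (m - 1) := by
  classical
  have hsub : (Finset.univ.filter (fun σ : Equiv.Perm (Fin m) => ¬ Good σ))
      ⊆ (Finset.univ.filter (fun σ : Equiv.Perm (Fin m) => σ fzero = flast))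
        ∪ (Finset.univ.filter (fun σ : Equiv.Perm (Fin m) => σ flast = fzero)) := by
    intro σ hσ
    rw [Finset.mem_filter] at hσ
    have h1 : ¬ (σ fzero ≠ flast ∧ σ flast ≠ fzero) := hσ.2
    rw [Finset.mem_union, Finset.mem_filter, Finset.mem_filter]
    by_cases h2 : σ fzero = flast
    · exact Or.inl ⟨Finset.mem_univ _, h2⟩
    · refine Or.inr ⟨Finset.mem_univ _, ?_⟩
      by_contra h3
      exact h1 ⟨h2, h3⟩
  have h4 := card_perm_eq (fzero : Fin m) flast
  have h5 := card_perm_eq (flast : Fin m) fzero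
  rw [Fintype.card_fin] at h4 h5
  calc (Finset.univ.filter (fun σ : Equiv.Perm (Fin m) => ¬ Good σ)).card
      ≤ ((Finset.univ.filter (fun σ : Equiv.Perm (Fin m) => σ fzero = flast))
        ∪ (Finset.univ.filter (fun σ : Equiv.Perm (Fin m) => σ flast = fzero))).card :=
        Finset.card_le_card hsub
    _ ≤ (Finset.univ.filter (fun σ : Equiv.Perm (Fin m) => σ fzero = flast)).card
        + (Finset.univ.filter (fun σ : Equiv.Perm (Fin m) => σ flast = fzero)).card :=
        Finset.card_union_le _ _
    _ ≤ 2 * Nat.factorial (m - 1) := by omega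

lemma exists_good_perm (hm : 500000 ≤ m) (k : ℕ)
    (hk2 : ((2 * m : ℕ) : ℝ) / 100000 < (k : ℝ) + 1)
    (hk1 : (k : ℝ) ≤ ((2 * m : ℕ) : ℝ) / 100000) :
    ∃ σ : Equiv.Perm (Fin m), Good σ ∧ BigComp (Gg σ) (k + 1) := by
  classical
  set c := k + 1 with hc
  set t := m / 10 with ht
  have hc100 : 100 * c ≤ m := by
    have h2 : ((2 * m : ℕ) : ℝ) = 2 * (m : ℝ) := by push_cast; ring
    rw [h2] at hk1
    have hmR : (500000 : ℝ) ≤ (m:ℝ) := by exact_mod_cast hm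
    have h1 : ((100 * c : ℕ) : ℝ) ≤ (m : ℝ) := by
      rw [hc]
      push_cast
      linarith
    exact_mod_cast h1
  have hc31 : 3 * c + 1 ≤ m + m := by omega
  set SS := (Finset.univ : Finset (Fin (m + m))).powerset.filter (fun S => S.card ≤ c) with hSS
  set BigBad := SS.biUnion (fun S => S.powerset.biUnion (fun T => BadSet S T)) with hBigBad
  -- counting
  have hX : BigBad.card * 20 ^ t
      ≤ ((c + 1) * ((m + m).choose c * 2 ^ c)) * (Nat.factorial m * 19 ^ t) := by
    have h1 : BigBad.card ≤ ∑ S ∈ SS, ∑ T ∈ S.powerset, (BadSet S T).card :=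
      le_trans Finset.card_biUnion_le (Finset.sum_le_sum (fun S _ => Finset.card_biUnion_le))
    have h2 : ∀ S ∈ SS, (∑ T ∈ S.powerset, (BadSet S T).card) * 20 ^ t
        ≤ 2 ^ S.card * (Nat.factorial m * 19 ^ t) := by
      intro S _
      rw [Finset.sum_mul]
      calc ∑ T ∈ S.powerset, (BadSet S T).card * 20 ^ t
          ≤ ∑ T ∈ S.powerset, Nat.factorial m * 19 ^ t :=
            Finset.sum_le_sum (fun T _ => badSet_card_bound hm S T)
        _ = 2 ^ S.card * (Nat.factorial m * 19 ^ t) := by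
            rw [Finset.sum_const, Finset.card_powerset, smul_eq_mul]
    calc BigBad.card * 20 ^ t
        ≤ (∑ S ∈ SS, ∑ T ∈ S.powerset, (BadSet S T).card) * 20 ^ t :=
          Nat.mul_le_mul_right _ h1
      _ = ∑ S ∈ SS, (∑ T ∈ S.powerset, (BadSet S T).card) * 20 ^ t := by
          rw [Finset.sum_mul]
      _ ≤ ∑ S ∈ SS, 2 ^ S.card * (Nat.factorial m * 19 ^ t) := Finset.sum_le_sum h2
      _ = (∑ S ∈ SS, 2 ^ S.card) * (Nat.factorial m * 19 ^ t) := by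
          rw [Finset.sum_mul]
      _ ≤ ((c + 1) * ((m + m).choose c * 2 ^ c)) * (Nat.factorial m * 19 ^ t) := by
          apply Nat.mul_le_mul_right
          exact sum_two_pow_le (m + m) c hc31
  have hfinal : 2 * ((k + 2) * ((2 * m).choose (k + 1) * 2 ^ (k + 1))) * 19 ^ (m / 10)
      ≤ 20 ^ (m / 10) := final_numeric m k hm hk2 hk1
  have h2m : m + m = 2 * m := by omega
  have hhalf : 2 * BigBad.card ≤ Nat.factorial m := by
    have h4 : 2 * BigBad.card * 20 ^ t ≤ Nat.factorial m * 20 ^ t := by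
      calc 2 * BigBad.card * 20 ^ t = 2 * (BigBad.card * 20 ^ t) := by ring
        _ ≤ 2 * (((c + 1) * ((m + m).choose c * 2 ^ c)) * (Nat.factorial m * 19 ^ t)) :=
            Nat.mul_le_mul_left _ hX
        _ = (2 * ((c + 1) * ((m + m).choose c * 2 ^ c)) * 19 ^ t) * Nat.factorial m := by ring
        _ ≤ 20 ^ t * Nat.factorial m := by
            apply Nat.mul_le_mul_right
            rw [h2m, hc, ht]
            have : k + 1 + 1 = k + 2 := by omega
            rw [this]
            exact hfinal
        _ = Nat.factorial m * 20 ^ t := by ring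
    have hpow : 0 < 20 ^ t := Nat.pow_pos (by norm_num)
    exact Nat.le_of_mul_le_mul_right h4 hpow
  have hforb := card_not_good (m := m) (by omega)
  have hfact : 8 * Nat.factorial (m - 1) ≤ Nat.factorial m := by
    have h6 : m * Nat.factorial (m - 1) = Nat.factorial m := Nat.mul_factorial_pred (by omega)
    have h7 : 8 * Nat.factorial (m - 1) ≤ m * Nat.factorial (m - 1) :=
      Nat.mul_le_mul_right _ (by omega)
    omega
  set BadAll := BigBad ∪ (Finset.univ.filter (fun σ : Equiv.Perm (Fin m) => ¬ Good σ))
    with hBadAll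
  have hlt : BadAll.card < Nat.factorial m := by
    have h5 : BadAll.card ≤ BigBad.card + 2 * Nat.factorial (m - 1) := by
      calc BadAll.card ≤ BigBad.card
            + (Finset.univ.filter (fun σ : Equiv.Perm (Fin m) => ¬ Good σ)).card :=
          Finset.card_union_le _ _
        _ ≤ BigBad.card + 2 * Nat.factorial (m - 1) := by omega
    have hfp : 0 < Nat.factorial (m - 1) := Nat.factorial_pos _
    omega
  have hcardU : (Finset.univ : Finset (Equiv.Perm (Fin m))).card = Nat.factorial m := by
    rw [Finset.card_univ, Fintype.card_perm, Fintype.card_fin]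
  obtain ⟨σ, hσ⟩ : ∃ σ : Equiv.Perm (Fin m), σ ∉ BadAll := by
    by_contra hcon
    push_neg at hcon
    have hsub2 : (Finset.univ : Finset (Equiv.Perm (Fin m))) ⊆ BadAll := fun σ _ => hcon σ
    have := Finset.card_le_card hsub2
    omega
  refine ⟨σ, ?_, ?_⟩
  · by_contra hng
    exact hσ (Finset.mem_union_right _ (Finset.mem_filter.mpr ⟨Finset.mem_univ _, hng⟩))
  · intro S hScard
    by_contra hno
    push_neg at hno
    have hP : ∀ v, v ∉ S → 2 * (compF (Gg σ) S v).card ≤ m + m := by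
      intro v hv
      have h8 := hno v hv
      rw [Fintype.card_fin] at h8
      omega
    obtain ⟨T, hTS, hσT⟩ := bad_cover hm σ S c hScard hc100 hP
    apply hσ
    refine Finset.mem_union_left _ ?_
    rw [hBigBad, Finset.mem_biUnion]
    refine ⟨S, ?_, ?_⟩
    · rw [hSS, Finset.mem_filter, Finset.mem_powerset]
      exact ⟨Finset.subset_univ _, hScard⟩
    · rw [Finset.mem_biUnion]
      exact ⟨T, Finset.mem_powerset.mpr hTS, hσT⟩

end Master

end Entangle

/-- There is an `α > 0` and an `n₀ ∈ ℕ` such that for every even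
`n ≥ n₀` there is a 3-regular simple graph on `n` vertices on which `⌊αn⌋` cops do not
suffice to catch the robber in the entanglement game. -/
theorem statement_2 :
    ∃ α : ℝ, 0 < α ∧ ∃ n₀ : ℕ, ∀ n : ℕ, Even n → n₀ ≤ n →
      ∃ G : SimpleGraph (Fin n),
        (∀ v : Fin n, (Finset.univ.filter (fun w => G.Adj v w)).card = 3) ∧
        ¬ CopsCatch G (Nat.floor (α * n)) := by
  refine ⟨1/100000, by norm_num, 1000000, ?_⟩
  intro n hne hn0
  obtain ⟨m, rfl⟩ := hne
  haveI : NeZero m := ⟨by omega⟩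
  have hm : 500000 ≤ m := by omega
  have hcast : (((m + m : ℕ) : ℝ)) = ((2 * m : ℕ) : ℝ) := by push_cast; ring
  set k := Nat.floor ((1:ℝ)/100000 * ((m + m : ℕ) : ℝ)) with hk
  have hk1 : (k : ℝ) ≤ ((2 * m : ℕ) : ℝ) / 100000 := by
    have h0 : (0:ℝ) ≤ (1:ℝ)/100000 * ((m + m : ℕ) : ℝ) := by positivity
    have h1 := Nat.floor_le h0
    calc (k : ℝ) ≤ (1:ℝ)/100000 * ((m + m : ℕ) : ℝ) := h1
      _ = ((2 * m : ℕ) : ℝ) / 100000 := by rw [hcast]; ring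
  have hk2 : ((2 * m : ℕ) : ℝ) / 100000 < (k : ℝ) + 1 := by
    have h1 := Nat.lt_floor_add_one ((1:ℝ)/100000 * ((m + m : ℕ) : ℝ))
    calc ((2 * m : ℕ) : ℝ) / 100000 = (1:ℝ)/100000 * ((m + m : ℕ) : ℝ) := by
          rw [hcast]; ring
      _ < (k : ℝ) + 1 := h1
  obtain ⟨σ, hgood, hbig⟩ := Entangle.exists_good_perm hm k hk2 hk1
  exact ⟨Entangle.Gg σ, fun v => Entangle.degree_three (by omega) σ hgood v,
    Entangle.robber_wins (Entangle.Gg σ) k hbig⟩
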